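/- Let (X, μ) be a measure space and r : X × ℝ → ℝ a function such that r(x,s) ≥ 0 for all (x,s), x ↦ r(x,s) is measurable for each s ∈ ℝ, x ↦ r(x,0) belongs to L²(μ), and there is L_r > 0 with |r(x,s₁) − r(x,s₂)| ≤ L_r|s₁ − s₂| for all x, s₁, s₂. Fix η ∈ L²(μ; ℝ) and define J : L²(μ; ℝ) → ℝ by J(v) = ∫_X r(x, |η(x)|) |v(x)| dμ(x). Then J is a continuous seminorm on L²(μ; ℝ): J(v + w) ≤ J(v) + J(w), J(λv) = |λ| J(v) for all v, w ∈ L²(μ; ℝ) and λ ∈ ℝ, and J is continuous (in particular convex and lower semicontinuous) on L²(μ; ℝ). -/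

import Mathlib

open MeasureTheory

/-- For fixed `η ∈ L²(μ)`, the functional `J(v) = ∫ r(x,|η x|) |v x| dμ` is a
continuous seminorm on `L²(μ)`: it is subadditive, absolutely homogeneous and
continuous (in particular convex and lower semicontinuous). -/
theorem friction_functional_is_continuous_seminorm
    {X : Type*} [MeasurableSpace X] (μ : Measure X)
    (r : X × ℝ → ℝ) (L_r : ℝ)
    (hr0 : ∀ x s, 0 ≤ r (x, s))
    (hrmeas : ∀ s : ℝ, Measurable fun x => r (x, s))
    (hr02 : MemLp (fun x => r (x, 0)) 2 μ)
    (hLr : 0 < L_r)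
    (hrlip : ∀ x s₁ s₂, |r (x, s₁) - r (x, s₂)| ≤ L_r * |s₁ - s₂|)
    (η : Lp ℝ 2 μ) (J : Lp ℝ 2 μ → ℝ)
    (hJ : ∀ v : Lp ℝ 2 μ, J v = ∫ x, r (x, |η x|) * |v x| ∂μ) :
    (∀ v w : Lp ℝ 2 μ, J (v + w) ≤ J v + J w) ∧
    (∀ (c : ℝ) (v : Lp ℝ 2 μ), J (c • v) = |c| * J v) ∧
    Continuous J ∧
    ConvexOn ℝ Set.univ J ∧
    LowerSemicontinuous J := by
  classical
  set G : X → ℝ := fun x => r (x, |η x|) with hGdef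
  -- measurability of the uncurried map
  have hunc : Measurable (Function.uncurry fun s (x : X) => r (x, s)) := by
    apply measurable_uncurry_of_continuous_of_measurable
    · intro x
      have : LipschitzWith (Real.toNNReal L_r) (fun s => r (x, s)) := by
        apply LipschitzWith.of_dist_le_mul
        intro s₁ s₂
        rw [Real.dist_eq, Real.dist_eq]
        calc |r (x, s₁) - r (x, s₂)| ≤ L_r * |s₁ - s₂| := hrlip x s₁ s₂
          _ ≤ Real.toNNReal L_r * |s₁ - s₂| := by
              gcongr
              exact Real.le_coe_toNNReal L_r
      exact this.continuous
    · exact hrmeas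
  -- a measurable representative of η
  obtain ⟨u, hu_meas, hηu⟩ : ∃ u : X → ℝ, Measurable u ∧ ⇑η =ᵐ[μ] u :=
    ⟨(Lp.aestronglyMeasurable η).mk _,
      (Lp.aestronglyMeasurable η).stronglyMeasurable_mk.measurable,
      (Lp.aestronglyMeasurable η).ae_eq_mk⟩
  set g : X → ℝ := fun x => r (x, |u x|) with hgdef
  have hg_meas : Measurable g := by
    have : g = (Function.uncurry fun s (x : X) => r (x, s)) ∘ fun x => (|u x|, x) := rfl
    rw [this]
    exact hunc.comp ((hu_meas.abs).prodMk measurable_id)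
  have hGg : G =ᵐ[μ] g := by
    filter_upwards [hηu] with x hx
    simp only [hGdef, hgdef, hx]
  -- g belongs to L²
  have hbound : MemLp (fun x => r (x, 0) + L_r * |u x|) 2 μ :=
    hr02.add (((Lp.memLp η).ae_eq hηu).norm.const_mul L_r)
  have hg_le : ∀ x, g x ≤ r (x, 0) + L_r * |u x| := by
    intro x
    have h1 : |r (x, |u x|) - r (x, 0)| ≤ L_r * |(|u x|) - 0| := hrlip x (|u x|) 0
    have h2 : r (x, |u x|) - r (x, 0) ≤ L_r * |u x| := by
      calc r (x, |u x|) - r (x, 0) ≤ |r (x, |u x|) - r (x, 0)| := le_abs_self _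
        _ ≤ L_r * |(|u x|) - 0| := h1
        _ = L_r * |u x| := by rw [sub_zero, abs_abs]
    linarith
  have hg_mem : MemLp g 2 μ := by
    refine hbound.of_le (hg_meas.aestronglyMeasurable) ?_
    filter_upwards with x
    rw [Real.norm_eq_abs, Real.norm_eq_abs, abs_of_nonneg (hr0 x _)]
    exact le_trans (hg_le x) (le_abs_self _)
  have hG_mem : MemLp G 2 μ := hg_mem.ae_eq hGg.symm
  set GLp : Lp ℝ 2 μ := hG_mem.toLp G with hGLpdef
  have hGL : ⇑GLp =ᵐ[μ] G := hG_mem.coeFn_toLp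
  -- key formula: J v = ⟪GLp, |v|⟫
  have hJinner : ∀ v : Lp ℝ 2 μ, J v = @inner ℝ _ _ GLp |v| := by
    intro v
    rw [hJ v, L2.inner_def]
    refine integral_congr_ae ?_
    filter_upwards [hGL, Lp.coeFn_abs v] with x hx1 hx2
    rw [RCLike.inner_apply, hx1, hx2]
    simp [hGdef, mul_comm]
  -- nonnegativity of G and integrability of the integrands
  have hG_nonneg : ∀ x, 0 ≤ G x := fun x => hr0 x _
  have hInt : ∀ v : Lp ℝ 2 μ, Integrable (fun x => G x * |v x|) μ := by
    intro v
    have := L2.integrable_inner (𝕜 := ℝ) GLp |v|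
    refine this.congr ?_
    filter_upwards [hGL, Lp.coeFn_abs v] with x hx1 hx2
    rw [RCLike.inner_apply, hx1, hx2]
    simp [mul_comm]
  have hJ' : ∀ v : Lp ℝ 2 μ, J v = ∫ x, G x * |v x| ∂μ := hJ
  -- subadditivity
  have hsub : ∀ v w : Lp ℝ 2 μ, J (v + w) ≤ J v + J w := by
    intro v w
    rw [hJ' (v + w), hJ' v, hJ' w, ← integral_add (hInt v) (hInt w)]
    have h1 : Integrable (fun x => G x * |(v + w : Lp ℝ 2 μ) x|) μ := hInt (v + w)
    refine integral_mono_ae h1 ((hInt v).add (hInt w)) ?_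
    filter_upwards [Lp.coeFn_add v w] with x hx
    simp only [Pi.add_apply] at hx ⊢
    rw [hx, ← mul_add]
    exact mul_le_mul_of_nonneg_left (abs_add_le _ _) (hG_nonneg x)
  -- absolute homogeneity
  have hhom : ∀ (c : ℝ) (v : Lp ℝ 2 μ), J (c • v) = |c| * J v := by
    intro c v
    rw [hJ' (c • v), hJ' v, ← integral_const_mul]
    refine integral_congr_ae ?_
    filter_upwards [Lp.coeFn_smul c v] with x hx
    rw [hx]
    simp only [Pi.smul_apply, smul_eq_mul, abs_mul]
    ring
  -- continuity
  have hlip : LipschitzWith ‖GLp‖₊ J := by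
    apply LipschitzWith.of_dist_le_mul
    intro v w
    rw [Real.dist_eq, hJinner v, hJinner w, ← inner_sub_right]
    calc |@inner ℝ _ _ GLp (|v| - |w|)| ≤ ‖GLp‖ * ‖|v| - |w|‖ :=
          abs_real_inner_le_norm _ _
      _ ≤ ‖GLp‖ * ‖v - w‖ := by
          gcongr
          exact norm_abs_sub_abs v w
      _ = ‖GLp‖₊ * dist v w := by rw [dist_eq_norm]; rfl
  have hcont : Continuous J := hlip.continuous
  refine ⟨hsub, hhom, hcont, ?_, hcont.lowerSemicontinuous⟩
  constructor
  · exact convex_univ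
  · intro v _ w _ a b ha hb hab
    calc J (a • v + b • w) ≤ J (a • v) + J (b • w) := hsub _ _
      _ = a * J v + b * J w := by
          rw [hhom a v, hhom b w, abs_of_nonneg ha, abs_of_nonneg hb]
      _ = a • J v + b • J w := rfl
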